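/- Let X ⊆ ℝ^d be a discrete set with complex coefficients (b_x)_{x∈X}, let δ > 0 satisfy X ∩ B_δ ⊆ {0}, and suppose there are constants B_X > 0 and P > 0 such that ∑_{x∈X∩B_r} |b_x| ≤ B_X r^P for all r ≥ δ. Let φ : ℝ^d → [0,∞) be a smooth radial function supported in B_1 with ∫φ = 1. Then for any a > 0 with a ≠ P there exists a constant W = W(δ,a,P) > 0 (also depending on φ) such that for all t > 0, ∑_{x∈X\{0}} |b_x · φ̂(tx)| / ‖x‖^a ≤ B_X · W · (1 + t^{a-P}). -/

import Mathlib

open MeasureTheory Filter Metric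
open scoped FourierTransform Real Topology

noncomputable section

/-- The number of points of `X` in the closed ball of radius `r` about the origin. -/
def ballCount {d : ℕ} (X : Set (EuclideanSpace ℝ (Fin d))) (r : ℝ) : ℕ :=
  (X ∩ closedBall 0 r).ncard

/-- The sum `∑_{s ∈ S ∩ B_r} ‖c s‖`. -/
def coeffSum {d : ℕ} (S : Set (EuclideanSpace ℝ (Fin d)))
    (c : EuclideanSpace ℝ (Fin d) → ℂ) (r : ℝ) : ℝ :=
  ∑' s : ↥(S ∩ closedBall 0 r), ‖c s.1‖

/-- `P` is a coefficient growth rate for the Fourier quasicrystal data `(Λ, S, c)`: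
`#(Λ ∩ B_r) + ∑_{s ∈ S ∩ B_r} ‖c s‖ = O(r ^ P)`. -/
def CoeffGrowthRate {d : ℕ} (Λ S : Set (EuclideanSpace ℝ (Fin d)))
    (c : EuclideanSpace ℝ (Fin d) → ℂ) (P : ℝ) : Prop :=
  ∃ C : ℝ, ∀ r ≥ (1 : ℝ), (ballCount Λ r : ℝ) + coeffSum S c r ≤ C * r ^ P

/-- `Λ ⊆ ℝ^d` is a Fourier quasicrystal with spectrum `S` and Fourier coefficients `c`:
both `Λ` and `S` are discrete (locally finite), the Poisson-type summation formula
`∑_{λ ∈ Λ} 𝓕 f (λ) = ∑_{s ∈ S} c s * f s` holds for every Schwartz function `f`,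
and the counting/coefficient data grows polynomially. -/
structure IsFourierQuasicrystal {d : ℕ} (Λ S : Set (EuclideanSpace ℝ (Fin d)))
    (c : EuclideanSpace ℝ (Fin d) → ℂ) : Prop where
  locallyFinite_Λ : ∀ r : ℝ, (Λ ∩ closedBall 0 r).Finite
  locallyFinite_S : ∀ r : ℝ, (S ∩ closedBall 0 r).Finite
  summable_left : ∀ f : SchwartzMap (EuclideanSpace ℝ (Fin d)) ℂ,
    Summable fun l : Λ => 𝓕 ⇑f l.1
  summable_right : ∀ f : SchwartzMap (EuclideanSpace ℝ (Fin d)) ℂ,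
    Summable fun s : S => c s.1 * f s.1
  summation : ∀ f : SchwartzMap (EuclideanSpace ℝ (Fin d)) ℂ,
    ∑' l : Λ, 𝓕 ⇑f l.1 = ∑' s : S, c s.1 * f s.1
  growth : ∃ P > 0, CoeffGrowthRate Λ S c P

/-- A set `X` is uniformly discrete if there is `δ > 0` with `‖x - y‖ ≥ δ`
for all distinct `x, y ∈ X`. -/
def UniformlyDiscrete {d : ℕ} (X : Set (EuclideanSpace ℝ (Fin d))) : Prop :=
  ∃ δ > 0, ∀ x ∈ X, ∀ y ∈ X, x ≠ y → δ ≤ dist x y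


lemma two_pow_rpow (u : ℝ) (k : ℕ) : ((2:ℝ)^k)^u = (2:ℝ)^((k:ℝ)*u) := by
  rw [← Real.rpow_natCast 2 k, ← Real.rpow_mul (by norm_num)]

lemma rpow_pow (u : ℝ) (k : ℕ) : ((2:ℝ)^u)^k = (2:ℝ)^(u*(k:ℝ)) := by
  rw [← Real.rpow_natCast ((2:ℝ)^u) k, ← Real.rpow_mul (by norm_num)]

lemma tail_annulus_val (R u v : ℝ) (hR : 0 < R) (k : ℕ) :
    (R*2^(k+1))^u * (R*2^k)^v = (R^(u+v) * (2:ℝ)^u) * ((2:ℝ)^(u+v))^k := by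
  have h2 : (0:ℝ) < 2 := by norm_num
  rw [Real.mul_rpow hR.le (by positivity), Real.mul_rpow hR.le (by positivity),
    two_pow_rpow, two_pow_rpow, rpow_pow, mul_mul_mul_comm, ← Real.rpow_add hR,
    ← Real.rpow_add h2, mul_assoc, ← Real.rpow_add h2]
  congr 1
  push_cast
  ring

lemma head_annulus_val (R u v : ℝ) (hR : 0 < R) (k : ℕ) :
    (R/2^k)^u * (R/2^(k+1))^v = (R^(u+v) * (2:ℝ)^(-v)) * ((2:ℝ)^(-(u+v)))^k := by
  have h2 : (0:ℝ) < 2 := by norm_num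
  rw [Real.div_rpow hR.le (by positivity), Real.div_rpow hR.le (by positivity),
    two_pow_rpow, two_pow_rpow, rpow_pow, div_mul_div_comm, ← Real.rpow_add hR,
    ← Real.rpow_add h2, div_eq_mul_inv, ← Real.rpow_neg h2.le, mul_assoc, ← Real.rpow_add h2]
  congr 1
  push_cast
  ring

lemma coeff_tsum_le {d : ℕ} {X : Set (EuclideanSpace ℝ (Fin d))} {b : EuclideanSpace ℝ (Fin d) → ℂ}
    (hX : ∀ r : ℝ, (X ∩ closedBall 0 r).Finite) {δ BX P : ℝ}
    (hgrowth : ∀ r ≥ δ, (∑' x : ↥(X ∩ closedBall 0 r), ‖b x.1‖) ≤ BX * r ^ P)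
    {A : Set (EuclideanSpace ℝ (Fin d))} {r : ℝ} (hr : δ ≤ r)
    (hA : A ⊆ X ∩ closedBall 0 r) :
    ∑' x : ↥A, ENNReal.ofReal ‖b x.1‖ ≤ ENNReal.ofReal (BX * r ^ P) := by
  have hfin := hX r
  have : Finite ↥(X ∩ closedBall 0 r) := hfin.to_subtype
  have hsum : Summable (fun x : ↥(X ∩ closedBall 0 r) => ‖b x.1‖) := .of_finite
  calc ∑' x : ↥A, ENNReal.ofReal ‖b x.1‖
      ≤ ∑' x : ↥(X ∩ closedBall 0 r), ENNReal.ofReal ‖b x.1‖ :=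
        ENNReal.tsum_mono_subtype (fun y => ENNReal.ofReal ‖b y‖) hA
    _ = ENNReal.ofReal (∑' x : ↥(X ∩ closedBall 0 r), ‖b x.1‖) :=
        (ENNReal.ofReal_tsum_of_nonneg (fun _ => norm_nonneg _) hsum).symm
    _ ≤ _ := ENNReal.ofReal_le_ofReal (hgrowth r hr)

lemma tsum_ofReal_geometric (c ρ : ℝ) (hρ0 : 0 ≤ ρ) (hρ1 : ρ < 1) :
    ∑' k : ℕ, ENNReal.ofReal (c * ρ^k) ≤ ENNReal.ofReal (c * (1-ρ)⁻¹) := by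
  rcases le_or_gt c 0 with hc | hc
  · have : ∀ k : ℕ, ENNReal.ofReal (c * ρ^k) = 0 := fun k =>
      ENNReal.ofReal_eq_zero.2 (mul_nonpos_of_nonpos_of_nonneg hc (by positivity))
    simp [this]
  · rw [← ENNReal.ofReal_tsum_of_nonneg (fun k => by positivity)
      ((summable_geometric_of_lt_one hρ0 hρ1).mul_left c), tsum_mul_left,
      tsum_geometric_of_lt_one hρ0 hρ1]

lemma dyadic_tail {d : ℕ} {X : Set (EuclideanSpace ℝ (Fin d))} {b : EuclideanSpace ℝ (Fin d) → ℂ}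
    (hX : ∀ r : ℝ, (X ∩ closedBall 0 r).Finite) {δ BX P : ℝ} (hδ : 0 < δ) (hBX : 0 ≤ BX)
    (hP : 0 < P)
    (hgrowth : ∀ r ≥ δ, (∑' x : ↥(X ∩ closedBall 0 r), ‖b x.1‖) ≤ BX * r ^ P)
    (q R : ℝ) (hq : P < q) (hR : δ ≤ R) :
    ∑' x : ↥{x ∈ X | R < ‖x‖}, ENNReal.ofReal (‖b x.1‖ * ‖x.1‖ ^ (-q)) ≤
      ENNReal.ofReal ((BX * ((2:ℝ)^P * (1 - (2:ℝ)^(P-q))⁻¹)) * R^(P-q)) := by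
  have hR0 : 0 < R := hδ.trans_le hR
  set A : ℕ → Set (EuclideanSpace ℝ (Fin d)) :=
    fun k => {x ∈ X | R*2^k < ‖x‖ ∧ ‖x‖ ≤ R*2^(k+1)} with hAdef
  have hcover : {x ∈ X | R < ‖x‖} ⊆ ⋃ k, A k := by
    rintro x ⟨hxX, hxR⟩
    have hex : ∃ n : ℕ, ‖x‖ ≤ R * 2^n := by
      obtain ⟨n, hn⟩ := exists_nat_gt (‖x‖ / R)
      have h2n : (n:ℝ) < (2:ℝ)^n := by exact_mod_cast Nat.lt_two_pow_self (n := n)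
      rw [div_lt_iff₀ hR0] at hn
      exact ⟨n, by nlinarith⟩
    set m := Nat.find hex with hmdef
    have hm : ‖x‖ ≤ R * 2^m := Nat.find_spec hex
    have hm0 : m ≠ 0 := by
      intro h
      rw [h] at hm
      simp only [pow_zero, mul_one] at hm
      exact absurd hm (not_le.2 hxR)
    obtain ⟨k, hk⟩ := Nat.exists_eq_succ_of_ne_zero hm0
    have hlt : R * 2^k < ‖x‖ := by
      have := Nat.find_min hex (show k < m by omega)
      push_neg at this
      exact this
    refine Set.mem_iUnion.2 ⟨k, hxX, hlt, ?_⟩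
    rw [← Nat.succ_eq_add_one, ← hk]
    exact hm
  have hρ0 : (0:ℝ) ≤ (2:ℝ)^(P-q) := (Real.rpow_pos_of_pos (by norm_num) _).le
  have hρ1 : (2:ℝ)^(P-q) < 1 :=
    Real.rpow_lt_one_of_one_lt_of_neg (by norm_num) (by linarith)
  calc ∑' x : ↥{x ∈ X | R < ‖x‖}, ENNReal.ofReal (‖b x.1‖ * ‖x.1‖ ^ (-q))
      ≤ ∑' x : ↥(⋃ k, A k), ENNReal.ofReal (‖b x.1‖ * ‖x.1‖ ^ (-q)) :=
        ENNReal.tsum_mono_subtype (fun y => ENNReal.ofReal (‖b y‖ * ‖y‖ ^ (-q))) hcover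
    _ ≤ ∑' k : ℕ, ∑' x : ↥(A k), ENNReal.ofReal (‖b x.1‖ * ‖x.1‖ ^ (-q)) :=
        ENNReal.tsum_iUnion_le_tsum (fun y => ENNReal.ofReal (‖b y‖ * ‖y‖ ^ (-q))) A
    _ ≤ ∑' k : ℕ, ENNReal.ofReal ((BX * ((2:ℝ)^P) * R^(P-q)) * ((2:ℝ)^(P-q))^k) := by
        refine ENNReal.tsum_le_tsum fun k => ?_
        have hks : (1:ℝ) ≤ 2^(k+1) := by
          calc (1:ℝ) = 1^(k+1) := (one_pow _).symm
          _ ≤ 2^(k+1) := pow_le_pow_left₀ (by norm_num) (by norm_num) _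
        have hrk : δ ≤ R * 2^(k+1) := hR.trans (le_mul_of_one_le_right hR0.le hks)
        have hsub : A k ⊆ X ∩ closedBall 0 (R * 2^(k+1)) := by
          rintro x ⟨hx1, hx2, hx3⟩
          exact ⟨hx1, mem_closedBall_zero_iff.2 hx3⟩
        have hpk : (0:ℝ) < R * 2^k := by positivity
        calc ∑' x : ↥(A k), ENNReal.ofReal (‖b x.1‖ * ‖x.1‖ ^ (-q))
            ≤ ∑' x : ↥(A k), ENNReal.ofReal ‖b x.1‖ * ENNReal.ofReal ((R*2^k) ^ (-q)) := by
              refine ENNReal.tsum_le_tsum fun x => ?_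
              rw [ENNReal.ofReal_mul (norm_nonneg _)]
              exact mul_le_mul_right (ENNReal.ofReal_le_ofReal
                (Real.rpow_le_rpow_of_nonpos hpk x.2.2.1.le (by linarith))) _
          _ = (∑' x : ↥(A k), ENNReal.ofReal ‖b x.1‖) * ENNReal.ofReal ((R*2^k) ^ (-q)) :=
              ENNReal.tsum_mul_right
          _ ≤ ENNReal.ofReal (BX * (R*2^(k+1)) ^ P) * ENNReal.ofReal ((R*2^k) ^ (-q)) :=
              mul_le_mul_left (coeff_tsum_le hX hgrowth hrk hsub) _
          _ = ENNReal.ofReal ((BX * ((2:ℝ)^P) * R^(P-q)) * ((2:ℝ)^(P-q))^k) := by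
              rw [← ENNReal.ofReal_mul (by positivity), mul_assoc,
                tail_annulus_val R P (-q) hR0 k]
              congr 1
              rw [show P + -q = P - q by ring]
              ring
    _ ≤ ENNReal.ofReal ((BX * ((2:ℝ)^P) * R^(P-q)) * (1 - (2:ℝ)^(P-q))⁻¹) :=
        tsum_ofReal_geometric _ _ hρ0 hρ1
    _ = _ := by
        congr 1
        ring

lemma dyadic_head {d : ℕ} {X : Set (EuclideanSpace ℝ (Fin d))} {b : EuclideanSpace ℝ (Fin d) → ℂ}
    (hX : ∀ r : ℝ, (X ∩ closedBall 0 r).Finite) {δ BX P : ℝ} (hδ : 0 < δ) (hBX : 0 ≤ BX)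
    (hgrowth : ∀ r ≥ δ, (∑' x : ↥(X ∩ closedBall 0 r), ‖b x.1‖) ≤ BX * r ^ P)
    (q R : ℝ) (hq0 : 0 ≤ q) (hq : q < P) (hR : δ ≤ R) :
    ∑' x : ↥{x ∈ X | δ < ‖x‖ ∧ ‖x‖ ≤ R}, ENNReal.ofReal (‖b x.1‖ * ‖x.1‖ ^ (-q)) ≤
      ENNReal.ofReal ((BX * ((2:ℝ)^q * (1 - (2:ℝ)^(q-P))⁻¹)) * R^(P-q)) := by
  have hR0 : 0 < R := hδ.trans_le hR
  set A : ℕ → Set (EuclideanSpace ℝ (Fin d)) :=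
    fun k => {x ∈ X | δ < ‖x‖ ∧ R/2^(k+1) < ‖x‖ ∧ ‖x‖ ≤ R/2^k} with hAdef
  have hcover : {x ∈ X | δ < ‖x‖ ∧ ‖x‖ ≤ R} ⊆ ⋃ k, A k := by
    rintro x ⟨hxX, hxδ, hxR⟩
    have hx0 : 0 < ‖x‖ := hδ.trans hxδ
    have hex : ∃ n : ℕ, R / 2^(n+1) < ‖x‖ := by
      obtain ⟨n, hn⟩ := exists_nat_gt (R / ‖x‖)
      have h2n : (n:ℝ) < (2:ℝ)^(n+1) := by
        have := Nat.lt_two_pow_self (n := n)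
        have h2 : ((2:ℕ)^n : ℝ) ≤ (2:ℝ)^(n+1) := by
          push_cast
          exact pow_le_pow_right₀ (by norm_num) (by omega)
        exact lt_of_lt_of_le (by exact_mod_cast this) h2
      refine ⟨n, ?_⟩
      rw [div_lt_iff₀ (by positivity)]
      rw [div_lt_iff₀ hx0] at hn
      nlinarith
    set m := Nat.find hex with hmdef
    have hm : R / 2^(m+1) < ‖x‖ := Nat.find_spec hex
    have hup : ‖x‖ ≤ R / 2^m := by
      rcases Nat.eq_zero_or_pos m with h0 | hpos
      · rw [h0]
        simpa using hxR
      · have := Nat.find_min hex (show m - 1 < m by omega)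
        push_neg at this
        have hms : m - 1 + 1 = m := by omega
        rwa [hms] at this
    exact Set.mem_iUnion.2 ⟨m, hxX, hxδ, hm, hup⟩
  have hρ0 : (0:ℝ) ≤ (2:ℝ)^(q-P) := (Real.rpow_pos_of_pos (by norm_num) _).le
  have hρ1 : (2:ℝ)^(q-P) < 1 :=
    Real.rpow_lt_one_of_one_lt_of_neg (by norm_num) (by linarith)
  calc ∑' x : ↥{x ∈ X | δ < ‖x‖ ∧ ‖x‖ ≤ R}, ENNReal.ofReal (‖b x.1‖ * ‖x.1‖ ^ (-q))
      ≤ ∑' x : ↥(⋃ k, A k), ENNReal.ofReal (‖b x.1‖ * ‖x.1‖ ^ (-q)) :=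
        ENNReal.tsum_mono_subtype (fun y => ENNReal.ofReal (‖b y‖ * ‖y‖ ^ (-q))) hcover
    _ ≤ ∑' k : ℕ, ∑' x : ↥(A k), ENNReal.ofReal (‖b x.1‖ * ‖x.1‖ ^ (-q)) :=
        ENNReal.tsum_iUnion_le_tsum (fun y => ENNReal.ofReal (‖b y‖ * ‖y‖ ^ (-q))) A
    _ ≤ ∑' k : ℕ, ENNReal.ofReal ((BX * ((2:ℝ)^q) * R^(P-q)) * ((2:ℝ)^(q-P))^k) := by
        refine ENNReal.tsum_le_tsum fun k => ?_
        rcases le_or_gt δ (R / 2^k) with hcase | hcase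
        · have hsub : A k ⊆ X ∩ closedBall 0 (R / 2^k) := by
            rintro x ⟨hx1, hx2, hx3, hx4⟩
            exact ⟨hx1, mem_closedBall_zero_iff.2 hx4⟩
          have hpk : (0:ℝ) < R / 2^(k+1) := by positivity
          calc ∑' x : ↥(A k), ENNReal.ofReal (‖b x.1‖ * ‖x.1‖ ^ (-q))
              ≤ ∑' x : ↥(A k), ENNReal.ofReal ‖b x.1‖ * ENNReal.ofReal ((R/2^(k+1)) ^ (-q)) := by
                refine ENNReal.tsum_le_tsum fun x => ?_
                rw [ENNReal.ofReal_mul (norm_nonneg _)]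
                exact mul_le_mul_right (ENNReal.ofReal_le_ofReal
                  (Real.rpow_le_rpow_of_nonpos hpk x.2.2.2.1.le (by linarith))) _
            _ = (∑' x : ↥(A k), ENNReal.ofReal ‖b x.1‖) * ENNReal.ofReal ((R/2^(k+1)) ^ (-q)) :=
                ENNReal.tsum_mul_right
            _ ≤ ENNReal.ofReal (BX * (R/2^k) ^ P) * ENNReal.ofReal ((R/2^(k+1)) ^ (-q)) :=
                mul_le_mul_left (coeff_tsum_le hX hgrowth hcase hsub) _
            _ = ENNReal.ofReal ((BX * ((2:ℝ)^q) * R^(P-q)) * ((2:ℝ)^(q-P))^k) := by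
                rw [← ENNReal.ofReal_mul (by positivity), mul_assoc,
                  head_annulus_val R P (-q) hR0 k]
                congr 1
                rw [show P + -q = P - q by ring, show (- -q : ℝ) = q by ring,
                  show -(P - q) = q - P by ring]
                ring
        · have hempty : A k = ∅ := by
            ext x
            simp only [Set.mem_empty_iff_false, iff_false]
            rintro ⟨hx1, hx2, hx3, hx4⟩
            linarith
          rw [hempty]
          simp
    _ ≤ ENNReal.ofReal ((BX * ((2:ℝ)^q) * R^(P-q)) * (1 - (2:ℝ)^(q-P))⁻¹) :=
        tsum_ofReal_geometric _ _ hρ0 hρ1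
    _ = _ := by
        congr 1
        ring

/-- Proposition 2.3: if the coefficients `b` of the discrete set `X`
(separated from `0` by `δ`) satisfy `∑_{x ∈ X ∩ B_r} ‖b x‖ ≤ B_X r^P` for `r ≥ δ`,
and `φ` is a fixed smooth radial nonnegative mollifier supported in `B_1` with `∫ φ = 1`,
then for every `a > 0` with `a ≠ P` there is `W > 0` such that for all `t > 0`,
`∑_{x ∈ X \ {0}} ‖b x * 𝓕φ(t x)‖ / ‖x‖^a ≤ B_X · W · (1 + t^(a-P))`. -/
theorem mollified_coefficient_sum_bound
    (d : ℕ) (X : Set (EuclideanSpace ℝ (Fin d))) (b : EuclideanSpace ℝ (Fin d) → ℂ)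
    (hX : ∀ r : ℝ, (X ∩ closedBall 0 r).Finite)
    (δ : ℝ) (hδ : 0 < δ) (hXδ : X ∩ closedBall 0 δ ⊆ {0})
    (BX P : ℝ) (hBX : 0 < BX) (hP : 0 < P)
    (hgrowth : ∀ r ≥ δ, (∑' x : ↥(X ∩ closedBall 0 r), ‖b x.1‖) ≤ BX * r ^ P)
    (φ : EuclideanSpace ℝ (Fin d) → ℝ)
    (hφ_smooth : ContDiff ℝ (⊤ : ℕ∞) φ) (hφ_nonneg : ∀ x, 0 ≤ φ x)
    (hφ_radial : ∀ x y : EuclideanSpace ℝ (Fin d), ‖x‖ = ‖y‖ → φ x = φ y)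
    (hφ_supp : Function.support φ ⊆ closedBall 0 1)
    (hφ_int : ∫ x, φ x = 1)
    (a : ℝ) (ha : 0 < a) (haP : a ≠ P) :
    ∃ W > 0, ∀ t > (0 : ℝ),
      ∑' x : ↥(X \ {0}),
          ENNReal.ofReal (‖b x.1 * 𝓕 (fun y => (φ y : ℂ)) (t • x.1)‖ / ‖x.1‖ ^ a)
        ≤ ENNReal.ofReal (BX * W * (1 + t ^ (a - P))) := by

  set ψ : EuclideanSpace ℝ (Fin d) → ℂ := fun y => (φ y : ℂ) with hψdef
  have hψ_cd : ContDiff ℝ (⊤ : ℕ∞) ψ := Complex.ofRealCLM.contDiff.comp hφ_smooth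
  have hψ_supp : Function.support ψ ⊆ closedBall 0 1 := by
    intro x hx
    apply hφ_supp
    simp only [Function.mem_support, hψdef, ne_eq, Complex.ofReal_eq_zero] at hx
    exact hx
  have hψ_ts : tsupport ψ ⊆ closedBall 0 1 := closure_minimal hψ_supp Metric.isClosed_closedBall
  have hψ_comp : HasCompactSupport ψ :=
    HasCompactSupport.intro (isCompact_closedBall 0 1) fun x hx =>
      by_contra fun h0 => hx (hψ_supp h0)
  let Φ : SchwartzMap (EuclideanSpace ℝ (Fin d)) ℂ :=
    { toFun := ψ
      smooth' := hψ_cd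
      decay' := by
        intro k n
        have hg : Continuous (iteratedFDeriv ℝ n ψ) :=
          hψ_cd.continuous_iteratedFDeriv (by exact_mod_cast le_top)
        have hgc : HasCompactSupport (iteratedFDeriv ℝ n ψ) := hψ_comp.iteratedFDeriv n
        obtain ⟨C, hC⟩ := hgc.exists_bound_of_continuous hg
        refine ⟨max C 0, fun x => ?_⟩
        rcases le_or_gt ‖x‖ 1 with h | h
        · have h1 : ‖x‖ ^ k ≤ 1 := pow_le_one₀ (norm_nonneg x) h
          have h2 := hC x
          have h3 : (0:ℝ) ≤ ‖iteratedFDeriv ℝ n ψ x‖ := norm_nonneg _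
          have h4 : (0:ℝ) ≤ ‖x‖ ^ k := by positivity
          nlinarith [le_max_left C 0, le_max_right C 0]
        · have hx0 : iteratedFDeriv ℝ n ψ x = 0 := by
            by_contra h0
            exact (not_le.2 h) (mem_closedBall_zero_iff.1
              (hψ_ts (support_iteratedFDeriv_subset n (Function.mem_support.2 h0))))
          rw [hx0, norm_zero, mul_zero]
          exact le_max_right C 0 }
  have hΦψ : ∀ ξ, 𝓕 ψ ξ = (SchwartzMap.fourierTransformCLM ℝ Φ) ξ := fun ξ => by
    rw [SchwartzMap.fourierTransformCLM_apply]
    rfl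
  have hφ_comp : HasCompactSupport φ :=
    HasCompactSupport.intro (isCompact_closedBall 0 1) fun x hx =>
      by_contra fun h0 => hx (hφ_supp h0)
  have hφ_int' : Integrable φ :=
    hφ_smooth.continuous.integrable_of_hasCompactSupport hφ_comp
  have bound1 : ∀ ξ, ‖𝓕 ψ ξ‖ ≤ 1 := by
    intro ξ
    have hb := VectorFourier.norm_fourierIntegral_le_integral_norm Real.fourierChar volume
      (innerₗ (EuclideanSpace ℝ (Fin d))) ψ ξ
    have heq : (∫ v, ‖ψ v‖) = ∫ v, φ v := by
      refine integral_congr_ae (Filter.Eventually.of_forall fun x => ?_)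
      simp [hψdef, abs_of_nonneg (hφ_nonneg x)]
    calc ‖𝓕 ψ ξ‖ ≤ ∫ v, ‖ψ v‖ := hb
      _ = 1 := by rw [heq, hφ_int]
  obtain ⟨N, hNP⟩ : ∃ N : ℕ, P < (N:ℝ) := ⟨⌊P⌋₊ + 1, by exact_mod_cast Nat.lt_floor_add_one P⟩
  obtain ⟨CN, hCN0, hCN⟩ := (SchwartzMap.fourierTransformCLM ℝ Φ).decay N 0
  have hdecay : ∀ ξ : EuclideanSpace ℝ (Fin d), ‖ξ‖ ^ ((N:ℕ):ℝ) * ‖𝓕 ψ ξ‖ ≤ CN := by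
    intro ξ
    have h := hCN ξ
    rw [norm_iteratedFDeriv_zero] at h
    rw [Real.rpow_natCast, hΦψ ξ]
    exact h
  have hsep : ∀ x ∈ X, x ≠ 0 → δ < ‖x‖ := by
    intro x hx hx0
    by_contra h
    push_neg at h
    exact hx0 (hXδ ⟨hx, mem_closedBall_zero_iff.2 h⟩)
  have hterm1 : ∀ (t : ℝ) (x : EuclideanSpace ℝ (Fin d)), 0 < ‖x‖ →
      ENNReal.ofReal (‖b x * 𝓕 ψ (t • x)‖ / ‖x‖ ^ a) ≤ ENNReal.ofReal (‖b x‖ * ‖x‖ ^ (-a)) := by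
    intro t x hx
    apply ENNReal.ofReal_le_ofReal
    rw [norm_mul, div_eq_mul_inv, ← Real.rpow_neg (norm_nonneg x)]
    exact mul_le_mul_of_nonneg_right
      (mul_le_of_le_one_right (norm_nonneg (b x)) (bound1 (t • x)))
      (Real.rpow_nonneg (norm_nonneg x) _)
  have hterm2 : ∀ t > (0:ℝ), ∀ x : EuclideanSpace ℝ (Fin d), 0 < ‖x‖ →
      ENNReal.ofReal (‖b x * 𝓕 ψ (t • x)‖ / ‖x‖ ^ a) ≤
        ENNReal.ofReal (CN * t ^ (-(N:ℝ))) *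
          ENNReal.ofReal (‖b x‖ * ‖x‖ ^ (-((N:ℝ) + a))) := by
    intro t ht x hx
    rw [← ENNReal.ofReal_mul (by positivity)]
    apply ENNReal.ofReal_le_ofReal
    have htx : ‖t • x‖ = t * ‖x‖ := by
      rw [norm_smul, Real.norm_eq_abs, abs_of_pos ht]
    have htxpos : (0:ℝ) < t * ‖x‖ := by positivity
    have hF : ‖𝓕 ψ (t • x)‖ ≤ CN * (t * ‖x‖) ^ (-(N:ℝ)) := by
      have hd := hdecay (t • x)
      rw [htx] at hd
      have hpos : (0:ℝ) < (t * ‖x‖) ^ ((N:ℕ):ℝ) := Real.rpow_pos_of_pos htxpos _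
      rw [Real.rpow_neg htxpos.le]
      rw [← le_div_iff₀' hpos] at hd
      rw [div_eq_mul_inv] at hd
      exact hd
    rw [norm_mul, div_eq_mul_inv, ← Real.rpow_neg (norm_nonneg x)]
    have expand : CN * t ^ (-(N:ℝ)) * (‖b x‖ * ‖x‖ ^ (-((N:ℝ) + a))) =
        ‖b x‖ * (CN * (t * ‖x‖) ^ (-(N:ℝ))) * ‖x‖ ^ (-a) := by
      rw [Real.mul_rpow ht.le (norm_nonneg x), show -((N:ℝ) + a) = -(N:ℝ) + -a by ring,
        Real.rpow_add hx]
      ring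
    rw [expand]
    exact mul_le_mul_of_nonneg_right (mul_le_mul_of_nonneg_left hF (norm_nonneg _))
      (Real.rpow_nonneg (norm_nonneg x) _)
  rcases lt_or_gt_of_ne haP with hlt | hgt
  · -- a < P
    have hq2 : P < (N:ℝ) + a := lt_of_lt_of_le hNP (le_add_of_nonneg_right ha.le)
    have hρh1 : (2:ℝ) ^ (a - P) < 1 :=
      Real.rpow_lt_one_of_one_lt_of_neg (by norm_num) (by linarith)
    have hρh0 : (0:ℝ) < 1 - (2:ℝ) ^ (a - P) := by linarith
    have hρt1 : (2:ℝ) ^ (P - ((N:ℝ) + a)) < 1 :=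
      Real.rpow_lt_one_of_one_lt_of_neg (by norm_num) (by linarith)
    have hρt0 : (0:ℝ) < 1 - (2:ℝ) ^ (P - ((N:ℝ) + a)) := by linarith
    refine ⟨((2:ℝ)^a * (1 - (2:ℝ)^(a-P))⁻¹) * δ^(P-a) + ((2:ℝ)^a * (1 - (2:ℝ)^(a-P))⁻¹)
      + CN * ((2:ℝ)^P * (1 - (2:ℝ)^(P-((N:ℝ)+a)))⁻¹), by positivity, fun t ht => ?_⟩
    have hRδ : δ ≤ max δ t⁻¹ := le_max_left _ _
    have hRt : t⁻¹ ≤ max δ t⁻¹ := le_max_right _ _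
    have hR0 : (0:ℝ) < max δ t⁻¹ := lt_of_lt_of_le hδ hRδ
    have hsplit : X \ {0} ⊆
        {x ∈ X | δ < ‖x‖ ∧ ‖x‖ ≤ max δ t⁻¹} ∪ {x ∈ X | max δ t⁻¹ < ‖x‖} := by
      rintro x ⟨hx1, hx2⟩
      have hd := hsep x hx1 (fun h => hx2 (Set.mem_singleton_iff.2 h))
      rcases le_or_gt ‖x‖ (max δ t⁻¹) with h | h
      · exact Or.inl ⟨hx1, hd, h⟩
      · exact Or.inr ⟨hx1, h⟩
    have hHead : ∑' x : ↥{x ∈ X | δ < ‖x‖ ∧ ‖x‖ ≤ max δ t⁻¹},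
        ENNReal.ofReal (‖b x.1 * 𝓕 ψ (t • x.1)‖ / ‖x.1‖ ^ a) ≤
        ENNReal.ofReal ((BX * ((2:ℝ)^a * (1 - (2:ℝ)^(a-P))⁻¹)) * (max δ t⁻¹)^(P-a)) := by
      refine le_trans (ENNReal.tsum_le_tsum fun x => hterm1 t x.1 (hδ.trans x.2.2.1)) ?_
      exact dyadic_head hX hδ hBX.le hgrowth a (max δ t⁻¹) ha.le hlt hRδ
    have hTail : ∑' x : ↥{x ∈ X | max δ t⁻¹ < ‖x‖},
        ENNReal.ofReal (‖b x.1 * 𝓕 ψ (t • x.1)‖ / ‖x.1‖ ^ a) ≤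
        ENNReal.ofReal (CN * t ^ (-(N:ℝ))) *
          ENNReal.ofReal ((BX * ((2:ℝ)^P * (1 - (2:ℝ)^(P-((N:ℝ)+a)))⁻¹))
            * (max δ t⁻¹)^(P-((N:ℝ)+a))) := by
      calc ∑' x : ↥{x ∈ X | max δ t⁻¹ < ‖x‖},
            ENNReal.ofReal (‖b x.1 * 𝓕 ψ (t • x.1)‖ / ‖x.1‖ ^ a)
          ≤ ∑' x : ↥{x ∈ X | max δ t⁻¹ < ‖x‖},
              ENNReal.ofReal (CN * t ^ (-(N:ℝ))) *
                ENNReal.ofReal (‖b x.1‖ * ‖x.1‖ ^ (-((N:ℝ) + a))) :=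
            ENNReal.tsum_le_tsum fun x => hterm2 t ht x.1 (hR0.trans x.2.2)
        _ = ENNReal.ofReal (CN * t ^ (-(N:ℝ))) *
              ∑' x : ↥{x ∈ X | max δ t⁻¹ < ‖x‖},
                ENNReal.ofReal (‖b x.1‖ * ‖x.1‖ ^ (-((N:ℝ) + a))) := ENNReal.tsum_mul_left
        _ ≤ _ := mul_le_mul_right
            (dyadic_tail hX hδ hBX.le hP hgrowth ((N:ℝ)+a) (max δ t⁻¹) hq2 hRδ) _
    have hτ : (0:ℝ) ≤ t ^ (a - P) := Real.rpow_nonneg ht.le _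
    calc ∑' x : ↥(X \ {0}), ENNReal.ofReal (‖b x.1 * 𝓕 ψ (t • x.1)‖ / ‖x.1‖ ^ a)
        ≤ ∑' x : ↥({x ∈ X | δ < ‖x‖ ∧ ‖x‖ ≤ max δ t⁻¹} ∪ {x ∈ X | max δ t⁻¹ < ‖x‖}),
            ENNReal.ofReal (‖b x.1 * 𝓕 ψ (t • x.1)‖ / ‖x.1‖ ^ a) :=
          ENNReal.tsum_mono_subtype
            (fun y => ENNReal.ofReal (‖b y * 𝓕 ψ (t • y)‖ / ‖y‖ ^ a)) hsplit
      _ ≤ (∑' x : ↥{x ∈ X | δ < ‖x‖ ∧ ‖x‖ ≤ max δ t⁻¹},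
            ENNReal.ofReal (‖b x.1 * 𝓕 ψ (t • x.1)‖ / ‖x.1‖ ^ a)) +
          ∑' x : ↥{x ∈ X | max δ t⁻¹ < ‖x‖},
            ENNReal.ofReal (‖b x.1 * 𝓕 ψ (t • x.1)‖ / ‖x.1‖ ^ a) :=
          ENNReal.tsum_union_le
            (fun y => ENNReal.ofReal (‖b y * 𝓕 ψ (t • y)‖ / ‖y‖ ^ a)) _ _
      _ ≤ ENNReal.ofReal ((BX * ((2:ℝ)^a * (1 - (2:ℝ)^(a-P))⁻¹)) * (max δ t⁻¹)^(P-a)) +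
          ENNReal.ofReal (CN * t ^ (-(N:ℝ))) *
            ENNReal.ofReal ((BX * ((2:ℝ)^P * (1 - (2:ℝ)^(P-((N:ℝ)+a)))⁻¹))
              * (max δ t⁻¹)^(P-((N:ℝ)+a))) := add_le_add hHead hTail
      _ ≤ _ := by
          rw [← ENNReal.ofReal_mul (by positivity),
            ← ENNReal.ofReal_add (by positivity) (by positivity)]
          apply ENNReal.ofReal_le_ofReal
          have hRa : (max δ t⁻¹)^(P-a) ≤ δ^(P-a) + t^(a-P) := by
            rcases max_cases δ t⁻¹ with ⟨h1, _⟩ | ⟨h1, _⟩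
            · rw [h1]
              linarith
            · rw [h1, Real.inv_rpow ht.le, ← Real.rpow_neg ht.le,
                show -(P-a) = a-P by ring]
              linarith [Real.rpow_nonneg hδ.le (P-a)]
          have hRq2 : t ^ (-(N:ℝ)) * (max δ t⁻¹)^(P-((N:ℝ)+a)) ≤ t^(a-P) := by
            have h1 : (max δ t⁻¹)^(P-((N:ℝ)+a)) ≤ (t⁻¹)^(P-((N:ℝ)+a)) :=
              Real.rpow_le_rpow_of_nonpos (by positivity) hRt (by linarith)
            have h2 : (t⁻¹)^(P-((N:ℝ)+a)) = t^(((N:ℝ)+a)-P) := by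
              rw [Real.inv_rpow ht.le, ← Real.rpow_neg ht.le,
                show -(P-((N:ℝ)+a)) = ((N:ℝ)+a)-P by ring]
            calc t ^ (-(N:ℝ)) * (max δ t⁻¹)^(P-((N:ℝ)+a))
                ≤ t ^ (-(N:ℝ)) * t^(((N:ℝ)+a)-P) :=
                  mul_le_mul_of_nonneg_left (h1.trans h2.le) (Real.rpow_nonneg ht.le _)
              _ = t^(a-P) := by
                  rw [← Real.rpow_add ht]
                  congr 1
                  ring
          have hCh : (0:ℝ) < (2:ℝ)^a * (1 - (2:ℝ)^(a-P))⁻¹ := by positivity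
          have hCt : (0:ℝ) < (2:ℝ)^P * (1 - (2:ℝ)^(P-((N:ℝ)+a)))⁻¹ := by positivity
          have e1 := mul_le_mul_of_nonneg_left hRq2
            (show (0:ℝ) ≤ BX * (CN * ((2:ℝ)^P * (1 - (2:ℝ)^(P-((N:ℝ)+a)))⁻¹)) by positivity)
          have e2 := mul_le_mul_of_nonneg_left hRa
            (show (0:ℝ) ≤ BX * ((2:ℝ)^a * (1 - (2:ℝ)^(a-P))⁻¹) by positivity)
          have hδa : (0:ℝ) ≤ δ^(P-a) := Real.rpow_nonneg hδ.le _
          nlinarith [mul_nonneg (mul_nonneg (mul_nonneg hBX.le hCh.le) hδa) hτ,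
            mul_nonneg (mul_nonneg hBX.le hCh.le) hτ,
            mul_nonneg (mul_nonneg hBX.le (mul_nonneg hCN0.le hCt.le)) hτ,
            mul_nonneg hBX.le hCh.le, mul_nonneg hBX.le (mul_nonneg hCN0.le hCt.le)]
  · -- P < a
    have hρ1 : (2:ℝ) ^ (P - a) < 1 :=
      Real.rpow_lt_one_of_one_lt_of_neg (by norm_num) (by linarith)
    have hρ0 : (0:ℝ) < 1 - (2:ℝ) ^ (P - a) := by linarith
    refine ⟨(2:ℝ) ^ P * (1 - (2:ℝ) ^ (P - a))⁻¹ * δ ^ (P - a), by positivity, fun t ht => ?_⟩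
    have hsub : X \ {0} ⊆ {x ∈ X | δ < ‖x‖} := fun x hx =>
      ⟨hx.1, hsep x hx.1 (fun h => hx.2 (Set.mem_singleton_iff.2 h))⟩
    calc ∑' x : ↥(X \ {0}), ENNReal.ofReal (‖b x.1 * 𝓕 ψ (t • x.1)‖ / ‖x.1‖ ^ a)
        ≤ ∑' x : ↥{x ∈ X | δ < ‖x‖},
            ENNReal.ofReal (‖b x.1 * 𝓕 ψ (t • x.1)‖ / ‖x.1‖ ^ a) :=
          ENNReal.tsum_mono_subtype
            (fun y => ENNReal.ofReal (‖b y * 𝓕 ψ (t • y)‖ / ‖y‖ ^ a)) hsub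
      _ ≤ ∑' x : ↥{x ∈ X | δ < ‖x‖}, ENNReal.ofReal (‖b x.1‖ * ‖x.1‖ ^ (-a)) :=
          ENNReal.tsum_le_tsum fun x => hterm1 t x.1 (hδ.trans x.2.2)
      _ ≤ ENNReal.ofReal ((BX * ((2:ℝ)^P * (1 - (2:ℝ)^(P-a))⁻¹)) * δ^(P-a)) :=
          dyadic_tail hX hδ hBX.le hP hgrowth a δ hgt le_rfl
      _ ≤ _ := by
          apply ENNReal.ofReal_le_ofReal
          have h1 : (0:ℝ) ≤ t ^ (a - P) := Real.rpow_nonneg ht.le _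
          have h2 : (0:ℝ) ≤ BX * ((2:ℝ)^P * (1 - (2:ℝ)^(P-a))⁻¹ * δ^(P-a)) := by positivity
          nlinarith [mul_nonneg h2 h1]
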